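/- arXiv:2412.03236 — 2 statements merged into one kernel-verified Lean document; each statement's English description precedes it below -/
import Mathlib

section
/- The function f_0(x,y) = max(0, rank x + rank y − max(rank P, rank Q)) is the least element of the lattice of quilts of type (P,Q): it is a quilt, and every quilt f satisfies f(x,y) ≥ f_0(x,y) for all x ∈ P, y ∈ Q. -/
/-- A quilt of alternating sign matrices of type `(P, Q)`, with respect to given rank
functions `rkP`, `rkQ`: a map `f : P × Q → ℕ` vanishing when either coordinate is the
least element, taking the value `min (rank P) (rank Q)` at `(⊤, ⊤)`, and satisfying
Boolean growth along each cover relation of the product poset `P × Q`. -/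
def IsQuilt {P Q : Type*} [PartialOrder P] [BoundedOrder P] [PartialOrder Q] [BoundedOrder Q]
    (rkP : P → ℕ) (rkQ : Q → ℕ) (f : P → Q → ℕ) : Prop :=
  (∀ y, f ⊥ y = 0) ∧
  (∀ x, f x ⊥ = 0) ∧
  f ⊤ ⊤ = min (rkP ⊤) (rkQ ⊤) ∧
  (∀ a b : P × Q, a ⋖ b → f b.1 b.2 = f a.1 a.2 ∨ f b.1 b.2 = f a.1 a.2 + 1)

/-- Key auxiliary lemma: if `r` increases by exactly 1 along covers and `g`
increases by at most 1 along covers, then `g b + r a ≤ g a + r b` whenever `a ≤ b`. -/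
lemma quilt_aux {α : Type*} [PartialOrder α] [Finite α]
    (r g : α → ℕ)
    (hr : ∀ a b : α, a ⋖ b → r b = r a + 1)
    (hg : ∀ a b : α, a ⋖ b → g b ≤ g a + 1) :
    ∀ a b : α, a ≤ b → g b + r a ≤ g a + r b := by
  intro a b
  refine WellFounded.induction (C := fun a => a ≤ b → g b + r a ≤ g a + r b)
    (wellFounded_gt) a ?_
  intro x ih hxb
  rcases eq_or_lt_of_le hxb with rfl | h
  · omega
  · obtain ⟨c, hxc, hcb⟩ := h.exists_covby_le
    have h1 := hr _ _ hxc
    have h3 := ih c hxc.lt hcb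
    have h2 := hg _ _ hxc
    omega

/-- The function `f₀(x, y) = max 0 (rank x + rank y - max (rank P) (rank Q))` (here
expressed with truncated subtraction on `ℕ`) is the least element of the lattice of
quilts of type `(P, Q)`: it is a quilt, and every quilt lies pointwise above it. -/
theorem quilt_bottom_element
    {P Q : Type*} [Fintype P] [PartialOrder P] [BoundedOrder P]
    [Fintype Q] [PartialOrder Q] [BoundedOrder Q]
    (rkP : P → ℕ) (rkQ : Q → ℕ)
    (hP0 : rkP ⊥ = 0) (hPcov : ∀ x y : P, x ⋖ y → rkP y = rkP x + 1)
    (hQ0 : rkQ ⊥ = 0) (hQcov : ∀ x y : Q, x ⋖ y → rkQ y = rkQ x + 1) :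
    IsQuilt rkP rkQ (fun x y => rkP x + rkQ y - max (rkP ⊤) (rkQ ⊤)) ∧
    (∀ f : P → Q → ℕ, IsQuilt rkP rkQ f → ∀ (x : P) (y : Q),
      rkP x + rkQ y - max (rkP ⊤) (rkQ ⊤) ≤ f x y) := by
  -- monotonicity of the rank functions
  have hPmono : ∀ x : P, rkP x ≤ rkP ⊤ := by
    intro x
    have := quilt_aux rkP (fun _ => 0) hPcov (fun a b _ => by omega) x ⊤ le_top
    omega
  have hQmono : ∀ y : Q, rkQ y ≤ rkQ ⊤ := by
    intro y
    have := quilt_aux rkQ (fun _ => 0) hQcov (fun a b _ => by omega) y ⊤ le_top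
    omega
  -- rank sum increases by 1 along covers in the product
  have hrk : ∀ a b : P × Q, a ⋖ b →
      rkP b.1 + rkQ b.2 = rkP a.1 + rkQ a.2 + 1 := by
    intro a b hab
    rcases Prod.covBy_iff.1 hab with ⟨h, he⟩ | ⟨h, he⟩
    · have := hPcov _ _ h; rw [← he]; omega
    · have := hQcov _ _ h; rw [← he]; omega
  constructor
  · refine ⟨?_, ?_, ?_, ?_⟩
    · intro y
      have := hQmono y
      simp only [hP0]
      omega
    · intro x
      have := hPmono x
      simp only [hQ0]
      omega
    · simp only []
      omega
    · intro a b hab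
      have := hrk a b hab
      simp only []
      omega
  · intro f hf x y
    obtain ⟨h1, h2, h3, h4⟩ := hf
    have key := quilt_aux (fun a : P × Q => rkP a.1 + rkQ a.2)
      (fun a : P × Q => f a.1 a.2) hrk
      (fun a b hab => by rcases h4 a b hab with h | h <;> omega)
      (x, y) (⊤, ⊤) le_top
    dsimp only at key
    have hx := hPmono x
    have hy := hQmono y
    omega
end

section
/- For a finite ranked poset P of rank k ≥ 2 with least and greatest elements, and any j ≥ 1, the number of quilts of type (P, A_2(j)) equals the sum over all convex cut sets C ⊆ P \ {0̂_P, 1̂_P} of α_P(C)^j, where α_P(C) is the number of antichains contained in C. -/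
/-- A type carrying `j` pairwise incomparable elements (the discrete order on `Fin j`). -/
structure DiscFin (j : ℕ) where
  val : Fin j

instance {j : ℕ} : PartialOrder (DiscFin j) where
  le a b := a = b
  le_refl _ := rfl
  le_trans _ _ _ h h' := Eq.trans (α := DiscFin j) h h'
  le_antisymm _ _ h _ := h

/-- The antichain poset `A₂(j)`: a least element `⊥` of rank 0, `j` pairwise
incomparable elements of rank 1, and a greatest element `⊤` of rank 2. -/
abbrev A2 (j : ℕ) := WithBot (WithTop (DiscFin j))

/-- The rank function of `A₂(j)`. -/
def rkA2 (j : ℕ) : A2 j → ℕ :=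
  WithBot.recBotCoe 0 (WithTop.recTopCoe 2 fun _ => 1)

/-- The rank-one element of `A₂(j)` indexed by `y : Fin j`. -/
def a2mid {j : ℕ} (y : Fin j) : A2 j :=
  ((((⟨y⟩ : DiscFin j) : WithTop (DiscFin j))) : A2 j)

set_option linter.unusedSectionVars false
set_option linter.unusedVariables false

section A2Facts
variable {j : ℕ}

lemma discfin_not_lt (a b : DiscFin j) : ¬ a < b := by
  rintro ⟨h1, h2⟩
  exact h2 (le_of_eq (h1.symm))

lemma a2_top_eq : (⊤ : A2 j) = ((⊤ : WithTop (DiscFin j)) : A2 j) := rfl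

lemma rkA2_top : rkA2 j ⊤ = 2 := rfl

lemma a2_cases (q : A2 j) : q = ⊥ ∨ q = ⊤ ∨ ∃ y : Fin j, q = a2mid y := by
  induction q using WithBot.recBotCoe with
  | bot => exact Or.inl rfl
  | coe w =>
    induction w using WithTop.recTopCoe with
    | top => exact Or.inr (Or.inl rfl)
    | coe d => exact Or.inr (Or.inr ⟨d.val, rfl⟩)

lemma wt_not_lt_coe {w : WithTop (DiscFin j)} {d : DiscFin j} :
    ¬ w < (d : WithTop (DiscFin j)) := by
  induction w using WithTop.recTopCoe with
  | top => exact not_top_lt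
  | coe d' => rw [WithTop.coe_lt_coe]; exact discfin_not_lt _ _

lemma a2_bot_lt_mid (y : Fin j) : (⊥ : A2 j) < a2mid y := WithBot.bot_lt_coe _

lemma a2_mid_lt_top (y : Fin j) : a2mid y < (⊤ : A2 j) := by
  rw [a2_top_eq, a2mid, WithBot.coe_lt_coe]
  exact WithTop.coe_lt_top _

lemma a2_bot_covBy (y : Fin j) : (⊥ : A2 j) ⋖ a2mid y := by
  refine ⟨a2_bot_lt_mid y, ?_⟩
  intro z hz1 hz2
  induction z using WithBot.recBotCoe with
  | bot => exact lt_irrefl _ hz1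
  | coe w =>
    rw [a2mid, WithBot.coe_lt_coe] at hz2
    exact wt_not_lt_coe hz2

lemma a2_mid_covBy_top (y : Fin j) : a2mid y ⋖ (⊤ : A2 j) := by
  refine ⟨a2_mid_lt_top y, ?_⟩
  intro z hz1 hz2
  induction z using WithBot.recBotCoe with
  | bot => exact not_lt_bot hz1
  | coe w =>
    rw [a2mid, WithBot.coe_lt_coe] at hz1
    induction w using WithTop.recTopCoe with
    | top => rw [a2_top_eq, WithBot.coe_lt_coe] at hz2; exact not_top_lt hz2
    | coe d => exact wt_not_lt_coe (lt_of_lt_of_le hz1 le_rfl) |>.elim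
      -- hz1 : coe mid < coe d in WithTop; that's coe < coe

lemma a2_covBy_cases (hj : 1 ≤ j) {q q' : A2 j} (h : q ⋖ q') :
    (q = ⊥ ∧ ∃ y, q' = a2mid y) ∨ ((∃ y, q = a2mid y) ∧ q' = ⊤) := by
  rcases a2_cases q with hq | hq | ⟨y, hq⟩ <;>
    rcases a2_cases q' with hq' | hq' | ⟨y', hq'⟩ <;> subst hq <;> subst hq'
  · exact absurd h.1 (lt_irrefl _)
  · exact absurd (h.2 (a2_bot_lt_mid ⟨0, hj⟩) (a2_mid_lt_top ⟨0, hj⟩)) not_false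
  · exact Or.inl ⟨rfl, y', rfl⟩
  · exact absurd h.1 not_top_lt
  · exact absurd h.1 (lt_irrefl _)
  · exact absurd h.1 not_top_lt
  · exact absurd h.1 not_lt_bot
  · exact Or.inr ⟨⟨y, rfl⟩, rfl⟩
  · exfalso
    have h1 := h.1
    rw [a2mid, a2mid, WithBot.coe_lt_coe] at h1
    exact wt_not_lt_coe h1

end A2Facts

section PFacts
variable {P : Type*} [Fintype P] [PartialOrder P]

lemma mono_of_covstep (f : P → ℕ) (h : ∀ a b : P, a ⋖ b → f a ≤ f b) : Monotone f := by
  have wfgt : WellFoundedGT P := Finite.to_wellFoundedGT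
  have key : ∀ x y : P, x < y → f x ≤ f y := fun x =>
    wfgt.wf.induction (C := fun x => ∀ y, x < y → f x ≤ f y) x
      (fun x ih y hxy => by
        obtain ⟨z, hxz, hzy⟩ := exists_covBy_le_of_lt hxy
        rcases hzy.eq_or_lt with rfl | hlt
        · exact h _ _ hxz
        · exact (h _ _ hxz).trans (ih z hxz.lt y hlt))
  intro a b hab
  rcases hab.eq_or_lt with rfl | h'
  · exact le_rfl
  · exact key _ _ h'

lemma chain_comp {S : Set P} (hS : IsChain (· ≤ ·) S) {a b : P} (ha : a ∈ S) (hb : b ∈ S) :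
    a ≤ b ∨ b ≤ a := by
  rcases eq_or_ne a b with rfl | hne
  · exact Or.inl le_rfl
  · exact hS ha hb hne

lemma exists_maxChain_pair (x y : P) (hxy : x ≤ y) :
    ∃ S : Set P, IsMaxChain (· ≤ ·) S ∧ x ∈ S ∧ y ∈ S := by
  have hc : IsChain (· ≤ ·) ({x, y} : Set P) := by
    intro a ha b hb hab
    rcases ha with rfl | ha <;> rcases hb with rfl | hb
    · exact absurd rfl hab
    · rw [Set.mem_singleton_iff] at hb; subst hb; exact Or.inl hxy
    · rw [Set.mem_singleton_iff] at ha; subst ha; exact Or.inr hxy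
    · rw [Set.mem_singleton_iff] at ha hb; subst ha; subst hb; exact absurd rfl hab
  obtain ⟨M, hM, hsub⟩ := hc.exists_maxChain
  exact ⟨M, hM, hsub (by simp), hsub (by simp)⟩

variable [BoundedOrder P]

lemma maxChain_bot_mem {S : Set P} (hS : IsMaxChain (· ≤ ·) S) : ⊥ ∈ S := by
  have h := hS.2 (t := insert ⊥ S) (hS.1.insert (fun b _ _ => Or.inl bot_le))
    (Set.subset_insert _ _)
  rw [h]; exact Set.mem_insert _ _

lemma maxChain_top_mem {S : Set P} (hS : IsMaxChain (· ≤ ·) S) : ⊤ ∈ S := by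
  have h := hS.2 (t := insert ⊤ S) (hS.1.insert (fun b _ _ => Or.inr le_top))
    (Set.subset_insert _ _)
  rw [h]; exact Set.mem_insert _ _

open scoped Classical in
lemma exists_one_on_maxChain (g : P → ℕ) (hmono : Monotone g)
    (hstep : ∀ a b : P, a ⋖ b → g b ≤ g a + 1) (hbot : g ⊥ = 0) (htop : g ⊤ = 2)
    {S : Set P} (hS : IsMaxChain (· ≤ ·) S) : ∃ z ∈ S, g z = 1 := by
  have hSfin : S.Finite := Set.toFinite S
  set Sf : Finset P := hSfin.toFinset with hSf
  have memSf : ∀ x, x ∈ Sf ↔ x ∈ S := fun x => hSfin.mem_toFinset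
  -- minimal element of T = {x ∈ S | 1 ≤ g x}
  set T : Finset P := Sf.filter (fun x => 1 ≤ g x) with hT
  have hTop : ⊤ ∈ T := by
    rw [hT, Finset.mem_filter, memSf]
    exact ⟨maxChain_top_mem hS, by omega⟩
  obtain ⟨m, hmT, hmmin⟩ := T.exists_minimal ⟨⊤, hTop⟩
  rw [hT, Finset.mem_filter, memSf] at hmT
  obtain ⟨hmS, hm1⟩ := hmT
  have hmne : m ≠ ⊥ := by rintro rfl; omega
  -- maximal element of U = {x ∈ S | x < m}
  set U : Finset P := Sf.filter (fun x => x < m) with hU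
  have hBotU : ⊥ ∈ U := by
    rw [hU, Finset.mem_filter, memSf]
    exact ⟨maxChain_bot_mem hS, bot_le.lt_of_ne (Ne.symm hmne)⟩
  obtain ⟨m', hm'U, hm'max⟩ := U.exists_maximal ⟨⊥, hBotU⟩
  rw [hU, Finset.mem_filter, memSf] at hm'U
  obtain ⟨hm'S, hm'm⟩ := hm'U
  -- m' ⋖ m
  have hcov : m' ⋖ m := by
    refine ⟨hm'm, ?_⟩
    intro z hz1 hz2
    have hzS : z ∈ S := by
      have h := hS.2 (t := insert z S) (hS.1.insert ?_) (Set.subset_insert _ _)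
      · rw [h]; exact Set.mem_insert _ _
      · intro s hsS hne
        rcases chain_comp hS.1 hsS hmS with hsm | hms
        · rcases chain_comp hS.1 hsS hm'S with hsm' | hm's
          · exact Or.inr (hsm'.trans hz1.le)
          · rcases eq_or_lt_of_le hsm with rfl | hsm2
            · exact Or.inl hz2.le
            · rcases eq_or_lt_of_le hm's with rfl | hm's2
              · exact Or.inr hz1.le
              · exact absurd
                  (hm'max (show s ∈ U by rw [hU, Finset.mem_filter, memSf]; exact ⟨hsS, hsm2⟩) hm's2.le)
                    (fun h => lt_irrefl _ (hm's2.trans_le h))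
        · exact Or.inl (hz2.le.trans hms)
    exact lt_irrefl _ (hz1.trans_le (hm'max (show z ∈ U by rw [hU, Finset.mem_filter, memSf]; exact ⟨hzS, hz2⟩) hz1.le))
  -- g m' = 0
  have hgm' : g m' = 0 := by
    by_contra hne
    exact lt_irrefl _ (hm'm.trans_le (hmmin (show m' ∈ T by rw [hT, Finset.mem_filter, memSf]; exact ⟨hm'S, by omega⟩) hm'm.le))
  have := hstep m' m hcov
  exact ⟨m, hmS, by omega⟩

end PFacts

section GC
variable {P : Type*} [Fintype P] [PartialOrder P] [BoundedOrder P]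

/-- The convex cut set condition. -/
def PCond (C : Finset P) : Prop :=
  (⊥ : P) ∉ C ∧ (⊤ : P) ∉ C ∧
  (∀ x z y : P, x ∈ C → y ∈ C → x ≤ z → z ≤ y → z ∈ C) ∧
  (∀ S : Set P, IsMaxChain (· ≤ ·) S → ∃ z ∈ S, z ∈ C)

/-- The order-filter-of-`C` condition. -/
def FltP (C F : Finset P) : Prop :=
  F ⊆ C ∧ ∀ x ∈ F, ∀ z ∈ C, x ≤ z → z ∈ F

open scoped Classical in
noncomputable def gC (C : Finset P) (x : P) : ℕ :=
  if x ∈ C then 1 else if ∃ c ∈ C, x ≤ c then 0 else 2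

lemma gC_mem {C : Finset P} {x : P} (h : x ∈ C) : gC C x = 1 := by
  rw [gC, if_pos h]

lemma gC_below {C : Finset P} {x : P} (h1 : x ∉ C) (h2 : ∃ c ∈ C, x ≤ c) : gC C x = 0 := by
  rw [gC, if_neg h1, if_pos h2]

lemma gC_above {C : Finset P} {x : P} (h1 : x ∉ C) (h2 : ¬ ∃ c ∈ C, x ≤ c) : gC C x = 2 := by
  rw [gC, if_neg h1, if_neg h2]

lemma gC_cases (C : Finset P) (x : P) :
    (x ∈ C ∧ gC C x = 1) ∨ (x ∉ C ∧ (∃ c ∈ C, x ≤ c) ∧ gC C x = 0) ∨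
    (x ∉ C ∧ ¬(∃ c ∈ C, x ≤ c) ∧ gC C x = 2) := by
  by_cases h1 : x ∈ C
  · exact Or.inl ⟨h1, gC_mem h1⟩
  · by_cases h2 : ∃ c ∈ C, x ≤ c
    · exact Or.inr (Or.inl ⟨h1, h2, gC_below h1 h2⟩)
    · exact Or.inr (Or.inr ⟨h1, h2, gC_above h1 h2⟩)

lemma gC_eq_one_iff {C : Finset P} {x : P} : gC C x = 1 ↔ x ∈ C := by
  rcases gC_cases C x with ⟨h, he⟩ | ⟨h, _, he⟩ | ⟨h, _, he⟩ <;> rw [he] <;> simp [h]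

lemma gC_bot {C : Finset P} (hC : PCond C) : gC C ⊥ = 0 := by
  obtain ⟨S, hS, -, -⟩ := exists_maxChain_pair (⊥ : P) ⊥ le_rfl
  obtain ⟨z, -, hzC⟩ := hC.2.2.2 S hS
  exact gC_below hC.1 ⟨z, hzC, bot_le⟩

lemma gC_top {C : Finset P} (hC : PCond C) : gC C ⊤ = 2 := by
  refine gC_above hC.2.1 ?_
  rintro ⟨c, hcC, hc⟩
  exact hC.2.1 (by rwa [le_antisymm le_top hc] at hcC)

lemma gC_mono {C : Finset P} (hC : PCond C) : Monotone (gC C) := by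
  intro a b hab
  rcases gC_cases C a with ⟨h1, he⟩ | ⟨h1, h2, he⟩ | ⟨h1, h2, he⟩
  · -- a ∈ C : show 1 ≤ gC C b
    rcases gC_cases C b with ⟨g1, ge⟩ | ⟨g1, ⟨c, hcC, hbc⟩, ge⟩ | ⟨g1, g2, ge⟩
    · omega
    · exact absurd (hC.2.2.1 a b c h1 hcC hab hbc) g1
    · omega
  · omega
  · -- no c above a : show gC C b = 2
    rcases gC_cases C b with ⟨g1, ge⟩ | ⟨g1, ⟨c, hcC, hbc⟩, ge⟩ | ⟨g1, g2, ge⟩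
    · exact absurd ⟨b, g1, hab⟩ h2
    · exact absurd ⟨c, hcC, hab.trans hbc⟩ h2
    · omega

lemma gC_covstep {C : Finset P} (hC : PCond C) {a b : P} (hab : a ⋖ b) :
    gC C b ≤ gC C a + 1 := by
  rcases gC_cases C b with ⟨g1, ge⟩ | ⟨g1, g2, ge⟩ | ⟨g1, g2, ge⟩
  · omega
  · omega
  · -- gC C b = 2 : show 1 ≤ gC C a
    rcases gC_cases C a with ⟨h1, he⟩ | ⟨h1, ⟨c, hcC, hac⟩, he⟩ | ⟨h1, h2, he⟩
    · omega
    · exfalso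
      obtain ⟨S, hS, haS, hbS⟩ := exists_maxChain_pair a b hab.le
      obtain ⟨z, hzS, hzC⟩ := hC.2.2.2 S hS
      rcases chain_comp hS.1 hzS haS with hza | haz
      · exact h1 (hC.2.2.1 z a c hzC hcC hza hac)
      · rcases chain_comp hS.1 hzS hbS with hzb | hbz
        · rcases eq_or_lt_of_le haz with rfl | haz2
          · exact h1 hzC
          · rcases eq_or_lt_of_le hzb with rfl | hzb2
            · exact g1 hzC
            · exact hab.2 haz2 hzb2
        · exact g2 ⟨z, hzC, hbz⟩
    · omega

end GC

section MK
variable {P : Type*} [Fintype P] [PartialOrder P] [BoundedOrder P] {j : ℕ}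

open scoped Classical in
noncomputable def mkQuilt (C : Finset P) (F : Fin j → Finset P) : P → A2 j → ℕ :=
  fun x q => WithBot.recBotCoe 0
    (WithTop.recTopCoe (gC C x) (fun d => if x ∈ F d.val ∨ gC C x = 2 then 1 else 0)) q

lemma mkQuilt_bot (C : Finset P) (F : Fin j → Finset P) (x : P) :
    mkQuilt C F x ⊥ = 0 := rfl

lemma mkQuilt_top (C : Finset P) (F : Fin j → Finset P) (x : P) :
    mkQuilt C F x ⊤ = gC C x := rfl

open scoped Classical in
lemma mkQuilt_mid (C : Finset P) (F : Fin j → Finset P) (x : P) (y : Fin j) :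
    mkQuilt C F x (a2mid y) = if x ∈ F y ∨ gC C x = 2 then 1 else 0 := rfl

lemma mkQuilt_mid_cases (C : Finset P) (F : Fin j → Finset P) (x : P) (y : Fin j) :
    ((x ∈ F y ∨ gC C x = 2) ∧ mkQuilt C F x (a2mid y) = 1) ∨
    (¬(x ∈ F y ∨ gC C x = 2) ∧ mkQuilt C F x (a2mid y) = 0) := by
  rw [mkQuilt_mid]
  by_cases h : x ∈ F y ∨ gC C x = 2
  · exact Or.inl ⟨h, if_pos h⟩
  · exact Or.inr ⟨h, if_neg h⟩

lemma gC_le_two (C : Finset P) (x : P) : gC C x ≤ 2 := by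
  rcases gC_cases C x with ⟨-, h⟩ | ⟨-, -, h⟩ | ⟨-, -, h⟩ <;> omega

lemma mkQuilt_isQuilt (rkP : P → ℕ) (hrk : 2 ≤ rkP ⊤) (hj : 1 ≤ j)
    {C : Finset P} (hC : PCond C) {F : Fin j → Finset P} (hF : ∀ y, FltP C (F y)) :
    IsQuilt rkP (rkA2 j) (mkQuilt C F) := by
  refine ⟨?_, ?_, ?_, ?_⟩
  · intro q
    rcases a2_cases q with rfl | rfl | ⟨y, rfl⟩
    · rfl
    · rw [mkQuilt_top]; exact gC_bot hC
    · rcases mkQuilt_mid_cases C F ⊥ y with ⟨h | h, he⟩ | ⟨-, he⟩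
      · exact absurd ((hF y).1 h) hC.1
      · rw [gC_bot hC] at h; omega
      · exact he
  · intro x; rfl
  · rw [mkQuilt_top, gC_top hC, rkA2_top, min_eq_right hrk]
  · rintro ⟨a1, a2⟩ ⟨b1, b2⟩ hab
    rcases Prod.mk_covBy_mk_iff.1 hab with ⟨hcov, rfl⟩ | ⟨hcov, rfl⟩
    · rcases a2_cases a2 with rfl | rfl | ⟨y, rfl⟩
      · exact Or.inl rfl
      · simp only [mkQuilt_top]
        have h1 := gC_mono hC hcov.le
        have h2 := gC_covstep hC hcov
        omega
      · rcases mkQuilt_mid_cases C F b1 y with ⟨hb, hbe⟩ | ⟨hb, hbe⟩ <;>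
          rcases mkQuilt_mid_cases C F a1 y with ⟨ha, hae⟩ | ⟨ha, hae⟩ <;>
          rw [hbe, hae]
        · exact Or.inl rfl
        · exact Or.inr rfl
        · exfalso
          push_neg at hb
          rcases ha with ha | ha
          · have ha1C : a1 ∈ C := (hF y).1 ha
            have hga : gC C a1 = 1 := gC_mem ha1C
            have h1 := gC_mono hC hcov.le
            have h2 := gC_covstep hC hcov
            have hgb2 : gC C b1 = 1 ∨ gC C b1 = 2 := by omega
            rcases hgb2 with hgb | hgb
            · exact hb.1 ((hF y).2 a1 ha b1 (gC_eq_one_iff.1 hgb) hcov.le)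
            · exact hb.2 hgb
          · have h1 := gC_mono hC hcov.le
            have h2 := gC_le_two C b1
            exact hb.2 (by omega)
        · exact Or.inl rfl
    · rcases a2_covBy_cases hj hcov with ⟨rfl, y, rfl⟩ | ⟨⟨y, rfl⟩, rfl⟩
      · rcases mkQuilt_mid_cases C F a1 y with ⟨-, he⟩ | ⟨-, he⟩ <;>
          simp [he, mkQuilt_bot]
      · simp only [mkQuilt_top]
        rcases mkQuilt_mid_cases C F a1 y with ⟨h | h, he⟩ | ⟨h, he⟩ <;> rw [he]
        · exact Or.inl (by rw [gC_mem ((hF y).1 h)])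
        · exact Or.inr (by rw [h])
        · push_neg at h
          have h2 := gC_le_two C a1
          rcases gC_cases C a1 with ⟨-, hg⟩ | ⟨-, -, hg⟩ | ⟨-, -, hg⟩
          · exact Or.inr (by omega)
          · exact Or.inl (by omega)
          · exact absurd hg h.2

end MK

section QU
variable {P : Type*} [Fintype P] [PartialOrder P] [BoundedOrder P] {j : ℕ}
variable {rkP : P → ℕ} {f : P → A2 j → ℕ}

lemma quilt_top_two (hf : IsQuilt rkP (rkA2 j) f) (hrk : 2 ≤ rkP ⊤) : f ⊤ ⊤ = 2 := by
  rw [hf.2.2.1, rkA2_top, min_eq_right hrk]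

lemma quilt_mono (hf : IsQuilt rkP (rkA2 j) f) (q : A2 j) : Monotone (fun x => f x q) := by
  apply mono_of_covstep
  intro a b hab
  have h := hf.2.2.2 (a, q) (b, q) (Prod.mk_covBy_mk_iff_left.2 hab)
  dsimp only at h
  omega

lemma quilt_mid_le_one (hf : IsQuilt rkP (rkA2 j) f) (x : P) (y : Fin j) :
    f x (a2mid y) ≤ 1 := by
  have h := hf.2.2.2 (x, ⊥) (x, a2mid y) (Prod.mk_covBy_mk_iff_right.2 (a2_bot_covBy y))
  have h0 := hf.2.1 x
  dsimp only at h
  omega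

lemma quilt_top_mid (hf : IsQuilt rkP (rkA2 j) f) (x : P) (y : Fin j) :
    f x (a2mid y) ≤ f x ⊤ ∧ f x ⊤ ≤ f x (a2mid y) + 1 := by
  have h := hf.2.2.2 (x, a2mid y) (x, ⊤) (Prod.mk_covBy_mk_iff_right.2 (a2_mid_covBy_top y))
  dsimp only at h
  omega

lemma quilt_top_le_two (hf : IsQuilt rkP (rkA2 j) f) (hrk : 2 ≤ rkP ⊤) (x : P) :
    f x ⊤ ≤ 2 := by
  have := quilt_mono hf ⊤ (le_top (a := x))
  have h2 := quilt_top_two hf hrk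
  dsimp only at this
  omega

open scoped Classical in
noncomputable def Cf (f : P → A2 j → ℕ) : Finset P :=
  Finset.univ.filter (fun x => f x ⊤ = 1)

open scoped Classical in
noncomputable def Ff (f : P → A2 j → ℕ) (y : Fin j) : Finset P :=
  Finset.univ.filter (fun x => f x ⊤ = 1 ∧ f x (a2mid y) = 1)

lemma mem_Cf {x : P} : x ∈ Cf f ↔ f x ⊤ = 1 := by
  classical
  simp [Cf]

lemma mem_Ff {x : P} {y : Fin j} : x ∈ Ff f y ↔ f x ⊤ = 1 ∧ f x (a2mid y) = 1 := by
  classical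
  simp [Ff]

lemma Cf_cond (hf : IsQuilt rkP (rkA2 j) f) (hrk : 2 ≤ rkP ⊤) : PCond (Cf f) := by
  refine ⟨?_, ?_, ?_, ?_⟩
  · rw [mem_Cf, hf.1 ⊤]; omega
  · rw [mem_Cf, quilt_top_two hf hrk]; omega
  · intro x z y hx hy hxz hzy
    rw [mem_Cf] at *
    have h1 := quilt_mono hf ⊤ hxz
    have h2 := quilt_mono hf ⊤ hzy
    dsimp only at h1 h2
    omega
  · intro S hS
    obtain ⟨z, hzS, hz⟩ := exists_one_on_maxChain (fun x => f x ⊤) (quilt_mono hf ⊤)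
      (fun a b hab => by
        have h := hf.2.2.2 (a, ⊤) (b, ⊤) (Prod.mk_covBy_mk_iff_left.2 hab)
        dsimp only at h ⊢; omega)
      (hf.1 ⊤) (quilt_top_two hf hrk) hS
    exact ⟨z, hzS, mem_Cf.2 hz⟩

lemma gC_Cf (hf : IsQuilt rkP (rkA2 j) f) (hrk : 2 ≤ rkP ⊤) (x : P) :
    gC (Cf f) x = f x ⊤ := by
  have h2 := quilt_top_le_two hf hrk x
  have hcase : f x ⊤ = 0 ∨ f x ⊤ = 1 ∨ f x ⊤ = 2 := by omega
  rcases hcase with h | h | h <;> rw [h]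
  · refine gC_below (by rw [mem_Cf]; omega) ?_
    obtain ⟨S, hS, hxS, -⟩ := exists_maxChain_pair x x le_rfl
    obtain ⟨z, hzS, hzC⟩ := (Cf_cond hf hrk).2.2.2 S hS
    rcases chain_comp hS.1 hzS hxS with hzx | hxz
    · have := quilt_mono hf ⊤ hzx
      dsimp only at this
      rw [mem_Cf] at hzC
      omega
    · exact ⟨z, hzC, hxz⟩
  · exact gC_mem (mem_Cf.2 h)
  · refine gC_above (by rw [mem_Cf]; omega) ?_
    rintro ⟨c, hcC, hxc⟩
    have := quilt_mono hf ⊤ hxc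
    rw [mem_Cf] at hcC
    dsimp only at this
    omega

lemma Ff_flt (hf : IsQuilt rkP (rkA2 j) f) : FltP (Cf f) (Ff f y) := by
  constructor
  · intro x hx
    rw [mem_Ff] at hx
    exact mem_Cf.2 hx.1
  · intro x hx z hz hxz
    rw [mem_Ff] at hx ⊢
    rw [mem_Cf] at hz
    have h1 := quilt_mono hf (a2mid y) hxz
    have h2 := quilt_mid_le_one hf z y
    dsimp only at h1
    exact ⟨hz, by omega⟩

lemma quilt_eq_mk (hf : IsQuilt rkP (rkA2 j) f) (hrk : 2 ≤ rkP ⊤) :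
    mkQuilt (Cf f) (fun y => Ff f y) = f := by
  funext x q
  rcases a2_cases q with rfl | rfl | ⟨y, rfl⟩
  · rw [mkQuilt_bot, hf.2.1 x]
  · rw [mkQuilt_top, gC_Cf hf hrk]
  · rw [mkQuilt_mid, gC_Cf hf hrk]
    have hle1 := quilt_mid_le_one hf x y
    have htm := quilt_top_mid hf x y
    have h2 := quilt_top_le_two hf hrk x
    by_cases h : x ∈ Ff f y ∨ f x ⊤ = 2
    · rw [if_pos h]
      rcases h with h | h
      · exact (mem_Ff.1 h).2.symm
      · omega
    · rw [if_neg h]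
      push_neg at h
      by_contra hne
      have hm1 : f x (a2mid y) = 1 := by omega
      have ht1 : f x ⊤ = 1 := by omega
      exact h.1 (mem_Ff.2 ⟨ht1, hm1⟩)

lemma Cf_mk {C : Finset P} {F : Fin j → Finset P} : Cf (mkQuilt C F) = C := by
  ext x
  rw [mem_Cf, mkQuilt_top, gC_eq_one_iff]

lemma Ff_mk {C : Finset P} {F : Fin j → Finset P} {y : Fin j} (hF : F y ⊆ C) :
    Ff (mkQuilt C F) y = F y := by
  ext x
  rw [mem_Ff, mkQuilt_top, mkQuilt_mid, gC_eq_one_iff]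
  constructor
  · rintro ⟨hxC, hite⟩
    have : ¬ gC C x = 2 := by rw [gC_mem hxC]; omega
    by_cases h : x ∈ F y ∨ gC C x = 2
    · rcases h with h | h
      · exact h
      · exact absurd h this
    · rw [if_neg h] at hite; omega
  · intro h
    exact ⟨hF h, by rw [if_pos (Or.inl h)]⟩

end QU

section FA
variable {P : Type*} [Fintype P] [PartialOrder P]

open scoped Classical in
noncomputable def minEls (F : Finset P) : Finset P :=
  F.filter (fun x => ∀ z ∈ F, z ≤ x → z = x)

open scoped Classical in
noncomputable def upClose (C A : Finset P) : Finset P :=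
  C.filter (fun z => ∃ a ∈ A, a ≤ z)

lemma mem_minEls {F : Finset P} {x : P} :
    x ∈ minEls F ↔ x ∈ F ∧ ∀ z ∈ F, z ≤ x → z = x := by
  classical
  simp [minEls]

lemma mem_upClose {C A : Finset P} {x : P} :
    x ∈ upClose C A ↔ x ∈ C ∧ ∃ a ∈ A, a ≤ x := by
  classical
  simp [upClose]

lemma minEls_antichain (F : Finset P) : IsAntichain (· ≤ ·) (minEls F : Set P) := by
  intro a ha b hb hne hab
  rw [Finset.mem_coe, mem_minEls] at ha hb
  exact hne (hb.2 a ha.1 hab)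

lemma upClose_flt {C A : Finset P} (hA : A ⊆ C) : FltP C (upClose C A) := by
  constructor
  · intro x hx; exact (mem_upClose.1 hx).1
  · intro x hx z hz hxz
    obtain ⟨-, a, haA, hax⟩ := mem_upClose.1 hx
    exact mem_upClose.2 ⟨hz, a, haA, hax.trans hxz⟩

lemma upClose_minEls {C F : Finset P} (hF : FltP C F) : upClose C (minEls F) = F := by
  ext x
  rw [mem_upClose]
  constructor
  · rintro ⟨hxC, a, haM, hax⟩
    exact hF.2 a (mem_minEls.1 haM).1 x hxC hax
  · intro hxF
    refine ⟨hF.1 hxF, ?_⟩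
    classical
    obtain ⟨m, hmT, hmmin⟩ := (F.filter (· ≤ x)).exists_minimal
      ⟨x, by simp [hxF]⟩
    rw [Finset.mem_filter] at hmT
    refine ⟨m, mem_minEls.2 ⟨hmT.1, ?_⟩, hmT.2⟩
    intro z hzF hzm
    by_contra hne
    exact hne (le_antisymm hzm (hmmin (Finset.mem_filter.2 ⟨hzF, hzm.trans hmT.2⟩) hzm))

lemma minEls_upClose {C A : Finset P} (hA : A ⊆ C)
    (hanti : IsAntichain (· ≤ ·) (A : Set P)) : minEls (upClose C A) = A := by
  ext x
  rw [mem_minEls]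
  constructor
  · rintro ⟨hxU, hmin⟩
    obtain ⟨-, a, haA, hax⟩ := mem_upClose.1 hxU
    have : a ∈ upClose C A := mem_upClose.2 ⟨hA haA, a, haA, le_rfl⟩
    rw [← hmin a this hax]
    exact haA
  · intro hxA
    refine ⟨mem_upClose.2 ⟨hA hxA, x, hxA, le_rfl⟩, ?_⟩
    intro z hzU hzx
    obtain ⟨-, a, haA, haz⟩ := mem_upClose.1 hzU
    have hax : a ≤ x := haz.trans hzx
    have : a = x := by
      by_contra hne
      exact hanti haA hxA hne hax
    subst this
    exact le_antisymm hzx haz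

open scoped Classical in
noncomputable def fltAntiEquiv (C : Finset P) :
    {F : Finset P // FltP C F} ≃
      {A : Finset P // A ∈ C.powerset.filter (fun A : Finset P =>
        IsAntichain (· ≤ ·) (A : Set P))} where
  toFun F := ⟨minEls F.1, by
    rw [Finset.mem_filter, Finset.mem_powerset]
    refine ⟨fun x hx => F.2.1 ((mem_minEls.1 hx).1), minEls_antichain _⟩⟩
  invFun A := ⟨upClose C A.1, upClose_flt (by
    have := A.2; rw [Finset.mem_filter, Finset.mem_powerset] at this; exact this.1)⟩
  left_inv F := Subtype.ext (upClose_minEls F.2)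
  right_inv A := Subtype.ext (by
    have := A.2; rw [Finset.mem_filter, Finset.mem_powerset] at this
    exact minEls_upClose this.1 this.2)

end FA


open scoped Classical in
/-- For a finite ranked poset `P` of rank `k ≥ 2` with least and greatest elements and
any `j ≥ 1`, the number of quilts of type `(P, A₂(j))` equals the sum, over all convex
cut sets `C ⊆ P \ {⊥, ⊤}`, of `α_P(C)^j`, where `α_P(C)` is the number of antichains
contained in `C`.  (A set is convex if it contains every element between two of its
members, and a cut set if it meets every maximal chain of `P`.) -/
theorem quilts_antichain_count
    {P : Type*} [Fintype P] [PartialOrder P] [BoundedOrder P]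
    (rkP : P → ℕ)
    (hP0 : rkP ⊥ = 0) (hPcov : ∀ x y : P, x ⋖ y → rkP y = rkP x + 1)
    (hrk : 2 ≤ rkP ⊤) (j : ℕ) (hj : 1 ≤ j) :
    Nat.card {f : P → A2 j → ℕ // IsQuilt rkP (rkA2 j) f} =
      ∑ C ∈ Finset.univ.filter (fun C : Finset P =>
          (⊥ : P) ∉ C ∧ (⊤ : P) ∉ C ∧
          (∀ x z y : P, x ∈ C → y ∈ C → x ≤ z → z ≤ y → z ∈ C) ∧
          (∀ S : Set P, IsMaxChain (· ≤ ·) S → ∃ z ∈ S, z ∈ C)),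
        ((C.powerset.filter fun A : Finset P =>
          IsAntichain (· ≤ ·) (A : Set P)).card) ^ j := by
  classical
  -- Step 1: quilts are equivalent to pairs (convex cut set, family of order filters)
  have e1 : {f : P → A2 j → ℕ // IsQuilt rkP (rkA2 j) f} ≃
      {d : Finset P × (Fin j → Finset P) // PCond d.1 ∧ ∀ y, FltP d.1 (d.2 y)} :=
    { toFun := fun f => ⟨(Cf f.1, fun y => Ff f.1 y),
        Cf_cond f.2 hrk, fun y => Ff_flt f.2⟩
      invFun := fun d => ⟨mkQuilt d.1.1 d.1.2,
        mkQuilt_isQuilt rkP hrk hj d.2.1 d.2.2⟩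
      left_inv := fun f => Subtype.ext (quilt_eq_mk f.2 hrk)
      right_inv := fun d => by
        obtain ⟨⟨C, F⟩, hC, hF⟩ := d
        refine Subtype.ext (Prod.ext ?_ ?_)
        · exact Cf_mk (C := C) (F := F)
        · exact funext fun y => Ff_mk (C := C) (F := F) (hF y).1 }
  have e2 := Equiv.subtypeProdEquivSigmaSubtype
    (fun (C : Finset P) (F : Fin j → Finset P) => PCond C ∧ ∀ y, FltP C (F y))
  rw [Nat.card_congr (e1.trans e2)]
  -- Step 2: card of the sigma type
  letI instT : ∀ C : Finset P,
      Fintype {F : Fin j → Finset P // PCond C ∧ ∀ y, FltP C (F y)} :=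
    fun C => Fintype.ofFinite _
  rw [Nat.card_eq_fintype_card, Fintype.card_sigma]
  -- Step 3: per-C count
  have hper : ∀ C : Finset P,
      Fintype.card {F : Fin j → Finset P // PCond C ∧ ∀ y, FltP C (F y)} =
        if PCond C then
          ((C.powerset.filter fun A : Finset P =>
            IsAntichain (· ≤ ·) (A : Set P)).card) ^ j
        else 0 := by
    intro C
    rw [← Nat.card_eq_fintype_card]
    by_cases hC : PCond C
    · rw [if_pos hC]
      have e3 : {F : Fin j → Finset P // PCond C ∧ ∀ y, FltP C (F y)} ≃
          (Fin j → {F : Finset P // FltP C F}) :=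
        (Equiv.subtypeEquivRight (fun F => and_iff_right hC)).trans
          Equiv.subtypePiEquivPi
      rw [Nat.card_congr e3, Nat.card_fun]
      have hX : Nat.card {F : Finset P // FltP C F} =
          ((C.powerset.filter fun A : Finset P =>
            IsAntichain (· ≤ ·) (A : Set P)).card) := by
        rw [Nat.card_congr (fltAntiEquiv C), Nat.card_eq_finsetCard]
      rw [hX]
      simp [Nat.card_eq_fintype_card]
    · rw [if_neg hC]
      haveI : IsEmpty {F : Fin j → Finset P // PCond C ∧ ∀ y, FltP C (F y)} :=
        ⟨fun F => hC F.2.1⟩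
      exact Nat.card_of_isEmpty
  -- Step 4: assemble the sum
  have hfilter : (Finset.univ.filter (fun C : Finset P =>
          (⊥ : P) ∉ C ∧ (⊤ : P) ∉ C ∧
          (∀ x z y : P, x ∈ C → y ∈ C → x ≤ z → z ≤ y → z ∈ C) ∧
          (∀ S : Set P, IsMaxChain (· ≤ ·) S → ∃ z ∈ S, z ∈ C))) =
      Finset.univ.filter (fun C : Finset P => PCond C) := by
    apply Finset.filter_congr
    intro C _
    exact Iff.rfl
  rw [hfilter, Finset.sum_filter]
  exact Finset.sum_congr rfl (fun C _ => hper C)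
end
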